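/- Let α > 0 and β > 0 be real numbers, let k > 0, let p be a positive integer, let q ∈ (0,1), and let λ > 0 and μ > 0 be real numbers. Then for all x, y with 0 < x < y < 1, the following strict double inequality holds: α^λ·k^{(λ/k)βx}·e^{−(λγ/k)βx}·Γ_k(α)^λ / ((α+βx)^λ·[p]_q^{μβx}·Γ_{(p,q)}(α)^μ) < Γ_k(α+βx)^λ / Γ_{(p,q)}(α+βx)^μ < (α+βy)^λ·k^{−(λ/k)β(y−x)}·e^{(λγ/k)β(y−x)}·Γ_k(α+βy)^λ / ((α+βx)^λ·[p]_q^{−μβ(y−x)}·Γ_{(p,q)}(α+βy)^μ). -/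

import Mathlib

open Real

/-- `[p]_q = (1 - q^p)/(1 - q)` -/
noncomputable def pnq (p : ℕ) (q : ℝ) : ℝ := (1 - q ^ p) / (1 - q)

/-- q-psi function via its series representation. -/
noncomputable def psiq (q s : ℝ) : ℝ :=
  -Real.log (1 - q) + Real.log q * ∑' n : ℕ, q ^ (((n : ℝ) + 1) * s) / (1 - q ^ (n + 1))

/-- (p,q)-psi function via its series representation. -/
noncomputable def psipq (p : ℕ) (q s : ℝ) : ℝ :=
  Real.log (pnq p q) +
    Real.log q * ∑ n ∈ Finset.range p, q ^ (((n : ℝ) + 1) * s) / (1 - q ^ (n + 1))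

/-- k-psi function via its series representation. -/
noncomputable def psik (k s : ℝ) : ℝ :=
  (Real.log k - Real.eulerMascheroniConstant) / k - 1 / s +
    ∑' n : ℕ, s / (((n : ℝ) + 1) * k * (((n : ℝ) + 1) * k + s))

/-- (q,k)-psi function via its series representation. -/
noncomputable def psiqk (q k s : ℝ) : ℝ :=
  -Real.log (1 - q) / k +
    Real.log q * ∑' n : ℕ, q ^ (((n : ℝ) + 1) * k * s) / (1 - q ^ (((n : ℝ) + 1) * k))

/-- Normalized q-Gamma function. -/
noncomputable def Gammaq (q s : ℝ) : ℝ :=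
  (1 - q) ^ (-s) *
    Real.exp (∑' n : ℕ, q ^ (((n : ℝ) + 1) * s) / (((n : ℝ) + 1) * (1 - q ^ (n + 1))))

/-- Normalized (p,q)-Gamma function. -/
noncomputable def Gammapq (p : ℕ) (q s : ℝ) : ℝ :=
  (pnq p q) ^ s *
    Real.exp (∑ n ∈ Finset.range p, q ^ (((n : ℝ) + 1) * s) / (((n : ℝ) + 1) * (1 - q ^ (n + 1))))

/-- Normalized (q,k)-Gamma function. -/
noncomputable def Gammaqk (q k s : ℝ) : ℝ :=
  (1 - q) ^ (-s / k) *
    Real.exp (∑' n : ℕ,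
      q ^ (((n : ℝ) + 1) * k * s) / (((n : ℝ) + 1) * k * (1 - q ^ (((n : ℝ) + 1) * k))))

/-- k-Gamma function. -/
noncomputable def Gammak (k s : ℝ) : ℝ :=
  ∫ x in Set.Ioi (0 : ℝ), Real.exp (-(x ^ k) / k) * x ^ (s - 1)


section Aux

open Real MeasureTheory

/-- The finite sum appearing in `Gammapq`. -/
noncomputable def Spq (p : ℕ) (q t : ℝ) : ℝ :=
  ∑ n ∈ Finset.range p, q ^ (((n : ℝ) + 1) * t) / (((n : ℝ) + 1) * (1 - q ^ (n + 1)))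

lemma pnq_pos {p : ℕ} (hp : 0 < p) {q : ℝ} (hq0 : 0 < q) (hq1 : q < 1) : 0 < pnq p q := by
  unfold pnq
  have h : q ^ p < 1 := pow_lt_one₀ hq0.le hq1 hp.ne'
  apply div_pos <;> linarith

lemma log_Gammapq {p : ℕ} (hp : 0 < p) {q : ℝ} (hq0 : 0 < q) (hq1 : q < 1) (t : ℝ) :
    Real.log (Gammapq p q t) = t * Real.log (pnq p q) + Spq p q t := by
  unfold Gammapq Spq
  rw [Real.log_mul (Real.rpow_pos_of_pos (pnq_pos hp hq0 hq1) t).ne' (Real.exp_ne_zero _),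
    Real.log_rpow (pnq_pos hp hq0 hq1), Real.log_exp]

lemma Gammapq_pos {p : ℕ} (hp : 0 < p) {q : ℝ} (hq0 : 0 < q) (hq1 : q < 1) (t : ℝ) :
    0 < Gammapq p q t :=
  mul_pos (Real.rpow_pos_of_pos (pnq_pos hp hq0 hq1) t) (Real.exp_pos _)

lemma Spq_anti {p : ℕ} (hp : 0 < p) {q : ℝ} (hq0 : 0 < q) (hq1 : q < 1) {t₁ t₂ : ℝ}
    (ht : t₁ < t₂) : Spq p q t₂ < Spq p q t₁ := by
  unfold Spq
  refine Finset.sum_lt_sum_of_nonempty (Finset.nonempty_range_iff.mpr hp.ne') fun n _ => ?_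
  have hn : (0 : ℝ) < (n : ℝ) + 1 := by positivity
  have hqn : q ^ (n + 1) < 1 := pow_lt_one₀ hq0.le hq1 (Nat.succ_ne_zero n)
  have hd : 0 < ((n : ℝ) + 1) * (1 - q ^ (n + 1)) := mul_pos hn (by linarith)
  have hnum : q ^ (((n : ℝ) + 1) * t₂) < q ^ (((n : ℝ) + 1) * t₁) :=
    Real.rpow_lt_rpow_of_exponent_gt hq0 hq1 (mul_lt_mul_of_pos_left ht hn)
  exact (div_lt_div_iff_of_pos_right hd).mpr hnum

lemma gammak_eq {k s : ℝ} (hk : 0 < k) (hs : 0 < s) :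
    Gammak k s = k ^ (s / k - 1) * Real.Gamma (s / k) := by
  have h1 : Gammak k s = ∫ x in Set.Ioi (0 : ℝ), x ^ (s - 1) * Real.exp (-(1 / k) * x ^ k) := by
    unfold Gammak
    refine setIntegral_congr_fun measurableSet_Ioi fun x hx => ?_
    rw [mul_comm]
    congr 2
    field_simp
  rw [h1, integral_rpow_mul_exp_neg_mul_rpow hk (by linarith) (by positivity)]
  rw [show s - 1 + 1 = s by ring]
  congr 1
  rw [one_div, Real.inv_rpow hk.le, ← Real.rpow_neg hk.le, ← Real.rpow_neg_one k,
    ← Real.rpow_add hk]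
  congr 1
  ring

lemma Gammak_pos {k s : ℝ} (hk : 0 < k) (hs : 0 < s) : 0 < Gammak k s := by
  rw [gammak_eq hk hs]
  exact mul_pos (Real.rpow_pos_of_pos hk _) (Real.Gamma_pos_of_pos (div_pos hs hk))

lemma neg_gamma_le_slope {b : ℝ} (hb : 1 < b) :
    -Real.eulerMascheroniConstant ≤ slope (Real.log ∘ Real.Gamma) 1 b := by
  have hder : HasDerivAt (Real.log ∘ Real.Gamma) (-Real.eulerMascheroniConstant) 1 := by
    have h := Real.hasDerivAt_Gamma_one.log (by rw [Real.Gamma_one]; exact one_ne_zero)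
    simpa [Real.Gamma_one, Function.comp_def] using h
  have htend := hasDerivAt_iff_tendsto_slope.mp hder
  have htend' : Filter.Tendsto (slope (Real.log ∘ Real.Gamma) 1) (nhdsWithin 1 (Set.Ioi 1))
      (nhds (-Real.eulerMascheroniConstant)) :=
    htend.mono_left (nhdsWithin_mono 1 fun x hx => Set.mem_compl_singleton_iff.mpr (ne_of_gt hx))
  refine le_of_tendsto htend' ?_
  filter_upwards [Ioo_mem_nhdsGT_of_mem (Set.left_mem_Ico.mpr hb)] with c hc
  have h := Real.convexOn_log_Gamma.secant_mono (Set.mem_Ioi.mpr one_pos)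
    (Set.mem_Ioi.mpr (lt_trans one_pos hc.1)) (Set.mem_Ioi.mpr (lt_trans one_pos (hc.1.trans hc.2)))
    (ne_of_gt hc.1) (ne_of_gt (hc.1.trans hc.2)) hc.2.le
  rw [slope_def_field, slope_def_field]
  exact h

lemma logGamma_add_mono {z w : ℝ} (hz : 0 < z) (hzw : z ≤ w) :
    Real.log (Real.Gamma z) + Real.log z + Real.eulerMascheroniConstant * z ≤
      Real.log (Real.Gamma w) + Real.log w + Real.eulerMascheroniConstant * w := by
  rcases eq_or_lt_of_le hzw with rfl | hlt
  · exact le_rfl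
  have hw : 0 < w := hz.trans hlt
  set f := Real.log ∘ Real.Gamma with hf
  have key : -Real.eulerMascheroniConstant * (w - z) ≤ f (w + 1) - f (z + 1) := by
    have h1 := neg_gamma_le_slope (show (1 : ℝ) < z + 1 by linarith)
    have h2 := Real.convexOn_log_Gamma.slope_mono_adjacent (Set.mem_Ioi.mpr one_pos)
      (Set.mem_Ioi.mpr (show (0 : ℝ) < w + 1 by linarith))
      (show (1 : ℝ) < z + 1 by linarith) (show z + 1 < w + 1 by linarith)
    rw [slope_def_field] at h1
    have h3 : -Real.eulerMascheroniConstant ≤ (f (w + 1) - f (z + 1)) / (w + 1 - (z + 1)) :=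
      le_trans h1 h2
    rw [show w + 1 - (z + 1) = w - z by ring] at h3
    have hwz : (0 : ℝ) < w - z := by linarith
    calc -Real.eulerMascheroniConstant * (w - z)
        ≤ (f (w + 1) - f (z + 1)) / (w - z) * (w - z) := by
          apply mul_le_mul_of_nonneg_right h3 hwz.le
      _ = f (w + 1) - f (z + 1) := by field_simp
  have ez : f (z + 1) = Real.log z + Real.log (Real.Gamma z) := by
    show Real.log (Real.Gamma (z + 1)) = _
    rw [Real.Gamma_add_one hz.ne', Real.log_mul hz.ne' (Real.Gamma_pos_of_pos hz).ne']
  have ew : f (w + 1) = Real.log w + Real.log (Real.Gamma w) := by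
    show Real.log (Real.Gamma (w + 1)) = _
    rw [Real.Gamma_add_one hw.ne', Real.log_mul hw.ne' (Real.Gamma_pos_of_pos hw).ne']
  rw [ez, ew] at key
  linarith

end Aux

theorem stmt14 (a b : ℝ) (ha : 0 < a) (hb : 0 < b)
    (k : ℝ) (hk : 0 < k) (p : ℕ) (hp : 0 < p) (q : ℝ) (hq : q ∈ Set.Ioo (0 : ℝ) 1)
    (lam mu : ℝ) (hlam : 0 < lam) (hmu : 0 < mu)
    (x y : ℝ) (hx : 0 < x) (hxy : x < y) (hy : y < 1) :
    a ^ lam * k ^ (lam / k * b * x) *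
        Real.exp (-(lam * Real.eulerMascheroniConstant / k * b * x)) * (Gammak k a) ^ lam /
        ((a + b * x) ^ lam * (pnq p q) ^ (mu * b * x) * (Gammapq p q a) ^ mu) <
      (Gammak k (a + b * x)) ^ lam / (Gammapq p q (a + b * x)) ^ mu ∧
    (Gammak k (a + b * x)) ^ lam / (Gammapq p q (a + b * x)) ^ mu <
      (a + b * y) ^ lam * k ^ (-(lam / k * b * (y - x))) *
        Real.exp (lam * Real.eulerMascheroniConstant / k * b * (y - x)) *
        (Gammak k (a + b * y)) ^ lam /
        ((a + b * x) ^ lam * (pnq p q) ^ (-(mu * b * (y - x))) *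
          (Gammapq p q (a + b * y)) ^ mu) := by
  have hq0 := hq.1
  have hq1 := hq.2
  have hpnq := pnq_pos hp hq0 hq1
  have hy0 : 0 < y := hx.trans hxy
  have hs : 0 < a + b * x := by positivity
  have hu : 0 < a + b * y := by positivity
  have Gk_expand : ∀ t : ℝ, 0 < t → Real.log (Gammak k t) =
      (t / k - 1) * Real.log k + Real.log (Real.Gamma (t / k)) := by
    intro t ht
    rw [gammak_eq hk ht,
      Real.log_mul (Real.rpow_pos_of_pos hk _).ne'
        (Real.Gamma_pos_of_pos (div_pos ht hk)).ne',
      Real.log_rpow hk]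
  have mono : ∀ t₁ t₂ : ℝ, 0 < t₁ → t₁ < t₂ →
      lam * Real.log (Gammak k t₁) - mu * Real.log (Gammapq p q t₁) + lam * Real.log t₁
        - lam * t₁ * (Real.log k - Real.eulerMascheroniConstant) / k
        + mu * t₁ * Real.log (pnq p q)
      < lam * Real.log (Gammak k t₂) - mu * Real.log (Gammapq p q t₂) + lam * Real.log t₂
        - lam * t₂ * (Real.log k - Real.eulerMascheroniConstant) / k
        + mu * t₂ * Real.log (pnq p q) := by
    intro t₁ t₂ ht₁ hlt
    have ht₂ : 0 < t₂ := ht₁.trans hlt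
    rw [Gk_expand t₁ ht₁, Gk_expand t₂ ht₂, log_Gammapq hp hq0 hq1, log_Gammapq hp hq0 hq1]
    have hdiv : t₁ / k ≤ t₂ / k := by gcongr
    have hA := logGamma_add_mono (div_pos ht₁ hk) hdiv
    rw [Real.log_div ht₁.ne' hk.ne', Real.log_div ht₂.ne' hk.ne'] at hA
    have hS := Spq_anti hp hq0 hq1 hlt
    have h1 := mul_le_mul_of_nonneg_left hA hlam.le
    have h2 := (mul_lt_mul_iff_right₀ hmu).mpr hS
    have hkne : k ≠ 0 := hk.ne'
    have e1 : lam * t₁ * (Real.log k - Real.eulerMascheroniConstant) / k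
        = lam * (t₁ / k) * Real.log k - lam * (Real.eulerMascheroniConstant * (t₁ / k)) := by
      field_simp
    have e2 : lam * t₂ * (Real.log k - Real.eulerMascheroniConstant) / k
        = lam * (t₂ / k) * Real.log k - lam * (Real.eulerMascheroniConstant * (t₂ / k)) := by
      field_simp
    rw [e1, e2]
    nlinarith [h1, h2]
  constructor
  · have h1 := mono a (a + b * x) ha (by nlinarith)
    rw [Real.rpow_def_of_pos ha, Real.rpow_def_of_pos hk, Real.rpow_def_of_pos (Gammak_pos hk ha),
      Real.rpow_def_of_pos hs, Real.rpow_def_of_pos hpnq,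
      Real.rpow_def_of_pos (Gammapq_pos hp hq0 hq1 a),
      Real.rpow_def_of_pos (Gammak_pos hk hs), Real.rpow_def_of_pos (Gammapq_pos hp hq0 hq1 _)]
    simp only [← Real.exp_add, ← Real.exp_sub, Real.exp_lt_exp]
    ring_nf at h1 ⊢; linarith [h1]
  · have h2 := mono (a + b * x) (a + b * y) hs (by nlinarith)
    rw [Real.rpow_def_of_pos (Gammak_pos hk hs), Real.rpow_def_of_pos (Gammapq_pos hp hq0 hq1 _),
      Real.rpow_def_of_pos hu, Real.rpow_def_of_pos hk,
      Real.rpow_def_of_pos (Gammak_pos hk hu), Real.rpow_def_of_pos hs,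
      Real.rpow_def_of_pos hpnq, Real.rpow_def_of_pos (Gammapq_pos hp hq0 hq1 (a + b * y))]
    simp only [← Real.exp_add, ← Real.exp_sub, Real.exp_lt_exp]
    ring_nf at h2 ⊢; linarith [h2]
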